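/- Let U ⊆ ℍ be open, f₀, f₁ : ℝ⁴ → ℝ be C¹, f : U → ℍ be given by f(x) = f₁(x₁,x₂,x₃,x₄)e₁ + ∑ᵢ₌₂⁴ xᵢ f₀(x₁,x₂,x₃,x₄)eᵢ, and c = ∑ₖcₖeₖ ∈ U. If f is algebraic regular at c, then the limit as Δq → 0 (Δq ∈ ℍ, Δq ≠ 0) of (Δq)⁻¹·{ f(c+Δq) − f(c) + ∑ᵢ₌₂⁴ [ f←ᶜᵢ(c + (Δq)ᵢ·(e₁+e₂+e₃+e₄)) − f←ᶜᵢ(c) ] } exists and equals ∂f/∂x₁(c), where (Δq)ᵢ denotes the i-th real coordinate of Δq. (Formally: the indicated function of Δq tends to ∂f/∂x₁(c) along the punctured neighborhood filter 𝓝[≠] 0 in ℍ.) -/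

import Mathlib

open scoped Quaternion

noncomputable section

/-- The standard basis `e₁ = 1, e₂ = i, e₃ = j, e₄ = k` of the quaternions. -/
def e : Fin 4 → ℍ[ℝ] := ![1, ⟨0,1,0,0⟩, ⟨0,0,1,0⟩, ⟨0,0,0,1⟩]

/-- The real coordinates of a quaternion. -/
def toTuple (x : ℍ[ℝ]) : Fin 4 → ℝ := ![x.re, x.imI, x.imJ, x.imK]
/-- The `i`-th partial derivative of a function `g : ℝ⁴ → ℝ`. -/
def pd (g : (Fin 4 → ℝ) → ℝ) (i : Fin 4) (p : Fin 4 → ℝ) : ℝ :=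
  fderiv ℝ g p (Pi.single i 1)

/-- `f` is given on `U` by `f(x) = f₁(x₁,x₂,x₃,x₄)e₁ + ∑ₖ₌₂⁴ xₖ f₀(x₁,x₂,x₃,x₄)eₖ`. -/
def Represents (f : ℍ[ℝ] → ℍ[ℝ]) (U : Set ℍ[ℝ]) (f₀ f₁ : (Fin 4 → ℝ) → ℝ) : Prop :=
  ∀ x ∈ U, f x = f₁ (toTuple x) • e 0 + (x.imI * f₀ (toTuple x)) • e 1 +
    (x.imJ * f₀ (toTuple x)) • e 2 + (x.imK * f₀ (toTuple x)) • e 3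

/-- The generalized Cauchy–Riemann equations (ii) of algebraic regularity, at `p ∈ ℝ⁴`. -/
def RegularEqs (f₀ f₁ : (Fin 4 → ℝ) → ℝ) (p : Fin 4 → ℝ) : Prop :=
  pd f₁ 0 p = f₀ p + p 1 * pd f₀ 1 p + p 2 * pd f₀ 2 p + p 3 * pd f₀ 3 p ∧
  (∀ i : Fin 4, i ≠ 0 → pd f₁ i p = -(p i * pd f₀ 0 p)) ∧
  (∀ i j : Fin 4, i ≠ 0 → j ≠ 0 → i ≠ j → p i * pd f₀ j p = p j * pd f₀ i p)

/-- `f` is algebraic regular at `c ∈ U`. -/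
def AlgebraicRegularAt (f : ℍ[ℝ] → ℍ[ℝ]) (U : Set ℍ[ℝ]) (c : ℍ[ℝ]) : Prop :=
  ∃ f₀ f₁ : (Fin 4 → ℝ) → ℝ, ContDiff ℝ 1 f₀ ∧ ContDiff ℝ 1 f₁ ∧
    Represents f U f₀ f₁ ∧ RegularEqs f₀ f₁ (toTuple c)

/-- `f` is algebraic regular on `U`. -/
def AlgebraicRegularOn (f : ℍ[ℝ] → ℍ[ℝ]) (U : Set ℍ[ℝ]) : Prop :=
  ∀ c ∈ U, AlgebraicRegularAt f U c
/-- The function `f←ᶜ₄` (case `i = 2, j = 3` of (113)). -/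
def flFour (f₀ : (Fin 4 → ℝ) → ℝ) (c : ℍ[ℝ]) (x : ℍ[ℝ]) : ℍ[ℝ] :=
  (c.imI * f₀ ![c.re, x.imI, c.imJ, c.imK] + c.imJ * f₀ ![c.re, c.imI, x.imJ, c.imK]) • e 3 -
  ((-1 : ℝ) ^ (2 + 3) * c.imI * f₀ ![x.re, c.imI, c.imJ, c.imK] +
    c.imK * f₀ ![c.re, c.imI, x.imJ, c.imK]) • e 2 +
  ((-1 : ℝ) ^ (2 + 3) * c.imJ * f₀ ![x.re, c.imI, c.imJ, c.imK] -
    c.imK * f₀ ![c.re, x.imI, c.imJ, c.imK]) • e 1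

/-- The function `f←ᶜ₃` (case `i = 2, j = 4` of (113)). -/
def flThree (f₀ : (Fin 4 → ℝ) → ℝ) (c : ℍ[ℝ]) (x : ℍ[ℝ]) : ℍ[ℝ] :=
  (c.imI * f₀ ![c.re, x.imI, c.imJ, c.imK] + c.imK * f₀ ![c.re, c.imI, c.imJ, x.imK]) • e 2 -
  ((-1 : ℝ) ^ (2 + 4) * c.imI * f₀ ![x.re, c.imI, c.imJ, c.imK] +
    c.imJ * f₀ ![c.re, c.imI, c.imJ, x.imK]) • e 3 +
  ((-1 : ℝ) ^ (2 + 4) * c.imK * f₀ ![x.re, c.imI, c.imJ, c.imK] -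
    c.imJ * f₀ ![c.re, x.imI, c.imJ, c.imK]) • e 1

/-- The function `f←ᶜ₂` (case `i = 3, j = 4` of (113)). -/
def flTwo (f₀ : (Fin 4 → ℝ) → ℝ) (c : ℍ[ℝ]) (x : ℍ[ℝ]) : ℍ[ℝ] :=
  (c.imJ * f₀ ![c.re, c.imI, x.imJ, c.imK] + c.imK * f₀ ![c.re, c.imI, c.imJ, x.imK]) • e 1 -
  ((-1 : ℝ) ^ (3 + 4) * c.imJ * f₀ ![x.re, c.imI, c.imJ, c.imK] +
    c.imI * f₀ ![c.re, c.imI, c.imJ, x.imK]) • e 3 +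
  ((-1 : ℝ) ^ (3 + 4) * c.imK * f₀ ![x.re, c.imI, c.imJ, c.imK] -
    c.imI * f₀ ![c.re, c.imI, x.imJ, c.imK]) • e 2

/-- The left difference quotient of Proposition 4.1 (ii). -/
def leftQuot (f : ℍ[ℝ] → ℍ[ℝ]) (f₀ : (Fin 4 → ℝ) → ℝ) (c : ℍ[ℝ]) (Δq : ℍ[ℝ]) : ℍ[ℝ] :=
  (Δq)⁻¹ *
    (f (c + Δq) - f c +
      (flTwo f₀ c (c + Δq.imI • (e 0 + e 1 + e 2 + e 3)) - flTwo f₀ c c) +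
      (flThree f₀ c (c + Δq.imJ • (e 0 + e 1 + e 2 + e 3)) - flThree f₀ c c) +
      (flFour f₀ c (c + Δq.imK • (e 0 + e 1 + e 2 + e 3)) - flFour f₀ c c))

open Filter Topology Asymptotics

namespace LeftQuotProof

@[simp] lemma tt0 (x : ℍ[ℝ]) : toTuple x 0 = x.re := rfl
@[simp] lemma tt1 (x : ℍ[ℝ]) : toTuple x 1 = x.imI := rfl
@[simp] lemma tt2 (x : ℍ[ℝ]) : toTuple x 2 = x.imJ := rfl
@[simp] lemma tt3 (x : ℍ[ℝ]) : toTuple x 3 = x.imK := rfl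


@[simp] lemma hre_smul (r : ℝ) (x : ℍ[ℝ]) : (r • x).re = r * x.re := rfl
@[simp] lemma himI_smul (r : ℝ) (x : ℍ[ℝ]) : (r • x).imI = r * x.imI := rfl
@[simp] lemma himJ_smul (r : ℝ) (x : ℍ[ℝ]) : (r • x).imJ = r * x.imJ := rfl
@[simp] lemma himK_smul (r : ℝ) (x : ℍ[ℝ]) : (r • x).imK = r * x.imK := rfl
@[simp] lemma hre_add (x y : ℍ[ℝ]) : (x + y).re = x.re + y.re := rfl
@[simp] lemma himI_add (x y : ℍ[ℝ]) : (x + y).imI = x.imI + y.imI := rfl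
@[simp] lemma himJ_add (x y : ℍ[ℝ]) : (x + y).imJ = x.imJ + y.imJ := rfl
@[simp] lemma himK_add (x y : ℍ[ℝ]) : (x + y).imK = x.imK + y.imK := rfl
lemma hre_mul (a b : ℍ[ℝ]) :
    (a * b).re = a.re * b.re - a.imI * b.imI - a.imJ * b.imJ - a.imK * b.imK := Quaternion.re_mul a b
lemma himI_mul (a b : ℍ[ℝ]) :
    (a * b).imI = a.re * b.imI + a.imI * b.re + a.imJ * b.imK - a.imK * b.imJ := Quaternion.imI_mul a b
lemma himJ_mul (a b : ℍ[ℝ]) :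
    (a * b).imJ = a.re * b.imJ - a.imI * b.imK + a.imJ * b.re + a.imK * b.imI := Quaternion.imJ_mul a b
lemma himK_mul (a b : ℍ[ℝ]) :
    (a * b).imK = a.re * b.imK + a.imI * b.imJ - a.imJ * b.imI + a.imK * b.re := Quaternion.imK_mul a b
@[simp] lemma e0_re : (e 0).re = 1 := rfl
@[simp] lemma e0_imI : (e 0).imI = 0 := rfl
@[simp] lemma e0_imJ : (e 0).imJ = 0 := rfl
@[simp] lemma e0_imK : (e 0).imK = 0 := rfl
@[simp] lemma e1_re : (e 1).re = 0 := rfl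
@[simp] lemma e1_imI : (e 1).imI = 1 := rfl
@[simp] lemma e1_imJ : (e 1).imJ = 0 := rfl
@[simp] lemma e1_imK : (e 1).imK = 0 := rfl
@[simp] lemma e2_re : (e 2).re = 0 := rfl
@[simp] lemma e2_imI : (e 2).imI = 0 := rfl
@[simp] lemma e2_imJ : (e 2).imJ = 1 := rfl
@[simp] lemma e2_imK : (e 2).imK = 0 := rfl
@[simp] lemma e3_re : (e 3).re = 0 := rfl
@[simp] lemma e3_imI : (e 3).imI = 0 := rfl
@[simp] lemma e3_imJ : (e 3).imJ = 0 := rfl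
@[simp] lemma e3_imK : (e 3).imK = 1 := rfl

/-- `toTuple` as a continuous linear map. -/
def Tc : ℍ[ℝ] →L[ℝ] (Fin 4 → ℝ) :=
  LinearMap.toContinuousLinearMap
    { toFun := toTuple
      map_add' := fun x y => by funext i; fin_cases i <;> simp [toTuple]
      map_smul' := fun r x => by funext i; fin_cases i <;> simp [toTuple] }

@[simp] lemma Tc_apply (x : ℍ[ℝ]) : Tc x = toTuple x := rfl

/-- The `i`-th coordinate as a continuous linear map. -/
def cd (i : Fin 4) : ℍ[ℝ] →L[ℝ] ℝ := (ContinuousLinearMap.proj i).comp Tc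

@[simp] lemma cd_apply (i : Fin 4) (x : ℍ[ℝ]) : cd i x = toTuple x i := rfl

/-- Inverse of `toTuple`. -/
def Sq (y : Fin 4 → ℝ) : ℍ[ℝ] := ⟨y 0, y 1, y 2, y 3⟩

lemma Sq_eq (y : Fin 4 → ℝ) : Sq y = y 0 • e 0 + y 1 • e 1 + y 2 • e 2 + y 3 • e 3 := by
  apply QuaternionAlgebra.ext <;> simp [Sq]

lemma continuous_Sq : Continuous Sq := by
  have h : Sq = fun y => y 0 • e 0 + y 1 • e 1 + y 2 • e 2 + y 3 • e 3 := funext Sq_eq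
  rw [h]; fun_prop

@[simp] lemma toTuple_Sq (y : Fin 4 → ℝ) : toTuple (Sq y) = y := by
  funext i; fin_cases i <;> rfl

@[simp] lemma Sq_toTuple (x : ℍ[ℝ]) : Sq (toTuple x) = x := rfl

/-- Two representations of the same function have the same data near any point of `U`. -/
lemma regEqs_transfer {U : Set ℍ[ℝ]} (hU : IsOpen U) {f : ℍ[ℝ] → ℍ[ℝ]}
    {f₀ f₁ g₀ g₁ : (Fin 4 → ℝ) → ℝ} (hf₀ : Continuous f₀) (hg₀ : Continuous g₀)
    (hf : Represents f U f₀ f₁) (hg : Represents f U g₀ g₁) {c : ℍ[ℝ]} (hc : c ∈ U)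
    (hreg : RegularEqs g₀ g₁ (toTuple c)) : RegularEqs f₀ f₁ (toTuple c) := by
  classical
  set V : Set (Fin 4 → ℝ) := Sq ⁻¹' U with hVdef
  have hVopen : IsOpen V := hU.preimage continuous_Sq
  have hcomp : ∀ y ∈ V, f₁ y = g₁ y ∧ y 1 * f₀ y = y 1 * g₀ y ∧
      y 2 * f₀ y = y 2 * g₀ y ∧ y 3 * f₀ y = y 3 * g₀ y := by
    intro y hy
    have h1 := hf (Sq y) hy
    have h2 := hg (Sq y) hy
    rw [toTuple_Sq] at h1 h2
    have hx := h1.symm.trans h2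
    refine ⟨?_, ?_, ?_, ?_⟩
    · have := congrArg QuaternionAlgebra.re hx; simpa [Sq] using this
    · have := congrArg QuaternionAlgebra.imI hx; simpa [Sq] using this
    · have := congrArg QuaternionAlgebra.imJ hx; simpa [Sq] using this
    · have := congrArg QuaternionAlgebra.imK hx; simpa [Sq] using this
  have hV_c : toTuple c ∈ V := by simp [hVdef, hc]
  have hf₁g₁ : f₁ =ᶠ[nhds (toTuple c)] g₁ :=
    Filter.eventuallyEq_of_mem (hVopen.mem_nhds hV_c) fun y hy => (hcomp y hy).1
  have hall : ∀ y ∈ V, f₀ y = g₀ y := by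
    intro y hy
    rcases eq_or_ne (y 1) 0 with h1 | h1
    · have hupd : Filter.Tendsto (fun t : ℝ => Function.update y 1 t) (nhds 0) (nhds y) := by
        have hcont : Continuous fun t : ℝ => Function.update y 1 t :=
          continuous_const.update 1 continuous_id
        have h0 := hcont.tendsto 0
        rwa [show Function.update y 1 (0 : ℝ) = y by rw [← h1, Function.update_eq_self]] at h0
      have hmem : ∀ᶠ t : ℝ in nhds 0, Function.update y 1 t ∈ V :=
        hupd.eventually (hVopen.eventually_mem hy)
      have heq : ∀ᶠ t : ℝ in nhdsWithin (0 : ℝ) ({0}ᶜ : Set ℝ),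
          g₀ (Function.update y 1 t) = f₀ (Function.update y 1 t) := by
        filter_upwards [hmem.filter_mono nhdsWithin_le_nhds, self_mem_nhdsWithin] with t htV ht0
        have h := (hcomp _ htV).2.1
        rw [Function.update_self] at h
        exact (mul_left_cancel₀ (by simpa using ht0) h).symm
      have l1 : Filter.Tendsto (fun t : ℝ => f₀ (Function.update y 1 t))
          (nhdsWithin (0 : ℝ) ({0}ᶜ : Set ℝ)) (nhds (f₀ y)) :=
        (hf₀.continuousAt.tendsto.comp hupd).mono_left nhdsWithin_le_nhds
      have l2' : Filter.Tendsto (fun t : ℝ => g₀ (Function.update y 1 t))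
          (nhdsWithin (0 : ℝ) ({0}ᶜ : Set ℝ)) (nhds (g₀ y)) :=
        (hg₀.continuousAt.tendsto.comp hupd).mono_left nhdsWithin_le_nhds
      have l2 : Filter.Tendsto (fun t : ℝ => f₀ (Function.update y 1 t))
          (nhdsWithin (0 : ℝ) ({0}ᶜ : Set ℝ)) (nhds (g₀ y)) :=
        Filter.Tendsto.congr' heq l2'
      exact tendsto_nhds_unique l1 l2
    · exact mul_left_cancel₀ h1 (hcomp y hy).2.1
  have hf₀g₀ : f₀ =ᶠ[nhds (toTuple c)] g₀ :=
    Filter.eventuallyEq_of_mem (hVopen.mem_nhds hV_c) fun y hy => hall y hy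
  have hpd0 : ∀ i, pd f₀ i (toTuple c) = pd g₀ i (toTuple c) := fun i => by
    unfold pd; rw [hf₀g₀.fderiv_eq]
  have hpd1 : ∀ i, pd f₁ i (toTuple c) = pd g₁ i (toTuple c) := fun i => by
    unfold pd; rw [hf₁g₁.fderiv_eq]
  have hval : f₀ (toTuple c) = g₀ (toTuple c) := hf₀g₀.eq_of_nhds
  obtain ⟨H1, H2, H3⟩ := hreg
  refine ⟨?_, ?_, ?_⟩
  · rw [hpd1 0, hpd0 1, hpd0 2, hpd0 3, hval]; exact H1
  · intro i hi; rw [hpd1 i, hpd0 0]; exact H2 i hi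
  · intro i j hi hj hij; rw [hpd0 i, hpd0 j]; exact H3 i j hi hj hij

/-- The direction `e₁+e₂+e₃+e₄`. -/
def sQ : ℍ[ℝ] := e 0 + e 1 + e 2 + e 3

lemma argRe (c : ℍ[ℝ]) (t : ℝ) :
    (![(c + t • sQ).re, c.imI, c.imJ, c.imK] : Fin 4 → ℝ)
      = toTuple c + t • (Pi.single 0 1 : Fin 4 → ℝ) := by
  funext i; fin_cases i <;> simp [sQ, toTuple, Pi.single_apply]

lemma argI (c : ℍ[ℝ]) (t : ℝ) :
    (![c.re, (c + t • sQ).imI, c.imJ, c.imK] : Fin 4 → ℝ)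
      = toTuple c + t • (Pi.single 1 1 : Fin 4 → ℝ) := by
  funext i; fin_cases i <;> simp [sQ, toTuple, Pi.single_apply]

lemma argJ (c : ℍ[ℝ]) (t : ℝ) :
    (![c.re, c.imI, (c + t • sQ).imJ, c.imK] : Fin 4 → ℝ)
      = toTuple c + t • (Pi.single 2 1 : Fin 4 → ℝ) := by
  funext i; fin_cases i <;> simp [sQ, toTuple, Pi.single_apply]

lemma argK (c : ℍ[ℝ]) (t : ℝ) :
    (![c.re, c.imI, c.imJ, (c + t • sQ).imK] : Fin 4 → ℝ)
      = toTuple c + t • (Pi.single 3 1 : Fin 4 → ℝ) := by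
  funext i; fin_cases i <;> simp [sQ, toTuple, Pi.single_apply]

/-- `f₀` along the `i`-th coordinate line through `c`. -/
def φ (f₀ : (Fin 4 → ℝ) → ℝ) (c : ℍ[ℝ]) (i : Fin 4) (t : ℝ) : ℝ :=
  f₀ (toTuple c + t • (Pi.single i 1 : Fin 4 → ℝ))

lemma hasDerivAt_φ (f₀ : (Fin 4 → ℝ) → ℝ) (hf₀ : ContDiff ℝ 1 f₀) (c : ℍ[ℝ]) (i : Fin 4) :
    HasDerivAt (φ f₀ c i) (pd f₀ i (toTuple c)) 0 := by
  have h1 : HasDerivAt (fun t : ℝ => toTuple c + t • (Pi.single i 1 : Fin 4 → ℝ))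
      (Pi.single i 1) 0 := by
    simpa using
      ((hasDerivAt_id (0 : ℝ)).smul_const (Pi.single i 1 : Fin 4 → ℝ)).const_add (toTuple c)
  have h2 : HasFDerivAt f₀ (fderiv ℝ f₀ (toTuple c))
      (toTuple c + (0 : ℝ) • (Pi.single i 1 : Fin 4 → ℝ)) := by
    simpa using ((hf₀.differentiable one_ne_zero) _).hasFDerivAt
  have h3 := h2.comp_hasDerivAt 0 h1
  exact h3

def H2 (f₀ : (Fin 4 → ℝ) → ℝ) (c : ℍ[ℝ]) (t : ℝ) : ℍ[ℝ] :=
  (c.imJ * φ f₀ c 2 t + c.imK * φ f₀ c 3 t) • e 1 -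
  ((-1 : ℝ) ^ (3 + 4) * c.imJ * φ f₀ c 0 t + c.imI * φ f₀ c 3 t) • e 3 +
  ((-1 : ℝ) ^ (3 + 4) * c.imK * φ f₀ c 0 t - c.imI * φ f₀ c 2 t) • e 2

def H3 (f₀ : (Fin 4 → ℝ) → ℝ) (c : ℍ[ℝ]) (t : ℝ) : ℍ[ℝ] :=
  (c.imI * φ f₀ c 1 t + c.imK * φ f₀ c 3 t) • e 2 -
  ((-1 : ℝ) ^ (2 + 4) * c.imI * φ f₀ c 0 t + c.imJ * φ f₀ c 3 t) • e 3 +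
  ((-1 : ℝ) ^ (2 + 4) * c.imK * φ f₀ c 0 t - c.imJ * φ f₀ c 1 t) • e 1

def H4 (f₀ : (Fin 4 → ℝ) → ℝ) (c : ℍ[ℝ]) (t : ℝ) : ℍ[ℝ] :=
  (c.imI * φ f₀ c 1 t + c.imJ * φ f₀ c 2 t) • e 3 -
  ((-1 : ℝ) ^ (2 + 3) * c.imI * φ f₀ c 0 t + c.imK * φ f₀ c 2 t) • e 2 +
  ((-1 : ℝ) ^ (2 + 3) * c.imJ * φ f₀ c 0 t - c.imK * φ f₀ c 1 t) • e 1

lemma flTwo_comp (f₀ : (Fin 4 → ℝ) → ℝ) (c : ℍ[ℝ]) (t : ℝ) :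
    flTwo f₀ c (c + t • sQ) = H2 f₀ c t := by
  unfold flTwo H2 φ
  rw [argRe, argJ, argK]

lemma flThree_comp (f₀ : (Fin 4 → ℝ) → ℝ) (c : ℍ[ℝ]) (t : ℝ) :
    flThree f₀ c (c + t • sQ) = H3 f₀ c t := by
  unfold flThree H3 φ
  rw [argRe, argI, argK]

lemma flFour_comp (f₀ : (Fin 4 → ℝ) → ℝ) (c : ℍ[ℝ]) (t : ℝ) :
    flFour f₀ c (c + t • sQ) = H4 f₀ c t := by
  unfold flFour H4 φ
  rw [argRe, argI, argJ]

def d2 (f₀ : (Fin 4 → ℝ) → ℝ) (c : ℍ[ℝ]) : ℍ[ℝ] :=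
  (c.imJ * pd f₀ 2 (toTuple c) + c.imK * pd f₀ 3 (toTuple c)) • e 1 -
  ((-1 : ℝ) ^ (3 + 4) * c.imJ * pd f₀ 0 (toTuple c) + c.imI * pd f₀ 3 (toTuple c)) • e 3 +
  ((-1 : ℝ) ^ (3 + 4) * c.imK * pd f₀ 0 (toTuple c) - c.imI * pd f₀ 2 (toTuple c)) • e 2

def d3 (f₀ : (Fin 4 → ℝ) → ℝ) (c : ℍ[ℝ]) : ℍ[ℝ] :=
  (c.imI * pd f₀ 1 (toTuple c) + c.imK * pd f₀ 3 (toTuple c)) • e 2 -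
  ((-1 : ℝ) ^ (2 + 4) * c.imI * pd f₀ 0 (toTuple c) + c.imJ * pd f₀ 3 (toTuple c)) • e 3 +
  ((-1 : ℝ) ^ (2 + 4) * c.imK * pd f₀ 0 (toTuple c) - c.imJ * pd f₀ 1 (toTuple c)) • e 1

def d4 (f₀ : (Fin 4 → ℝ) → ℝ) (c : ℍ[ℝ]) : ℍ[ℝ] :=
  (c.imI * pd f₀ 1 (toTuple c) + c.imJ * pd f₀ 2 (toTuple c)) • e 3 -
  ((-1 : ℝ) ^ (2 + 3) * c.imI * pd f₀ 0 (toTuple c) + c.imK * pd f₀ 2 (toTuple c)) • e 2 +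
  ((-1 : ℝ) ^ (2 + 3) * c.imJ * pd f₀ 0 (toTuple c) - c.imK * pd f₀ 1 (toTuple c)) • e 1

lemma hasDerivAt_H2 (f₀ : (Fin 4 → ℝ) → ℝ) (hf₀ : ContDiff ℝ 1 f₀) (c : ℍ[ℝ]) :
    HasDerivAt (H2 f₀ c) (d2 f₀ c) 0 := by
  have h0 := hasDerivAt_φ f₀ hf₀ c 0
  have ha := hasDerivAt_φ f₀ hf₀ c 2
  have hb := hasDerivAt_φ f₀ hf₀ c 3
  exact ((((ha.const_mul c.imJ).add (hb.const_mul c.imK)).smul_const (e 1)).sub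
    (((h0.const_mul ((-1 : ℝ) ^ (3 + 4) * c.imJ)).add (hb.const_mul c.imI)).smul_const
      (e 3))).add
    (((h0.const_mul ((-1 : ℝ) ^ (3 + 4) * c.imK)).sub (ha.const_mul c.imI)).smul_const (e 2))

lemma hasDerivAt_H3 (f₀ : (Fin 4 → ℝ) → ℝ) (hf₀ : ContDiff ℝ 1 f₀) (c : ℍ[ℝ]) :
    HasDerivAt (H3 f₀ c) (d3 f₀ c) 0 := by
  have h0 := hasDerivAt_φ f₀ hf₀ c 0
  have ha := hasDerivAt_φ f₀ hf₀ c 1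
  have hb := hasDerivAt_φ f₀ hf₀ c 3
  exact ((((ha.const_mul c.imI).add (hb.const_mul c.imK)).smul_const (e 2)).sub
    (((h0.const_mul ((-1 : ℝ) ^ (2 + 4) * c.imI)).add (hb.const_mul c.imJ)).smul_const
      (e 3))).add
    (((h0.const_mul ((-1 : ℝ) ^ (2 + 4) * c.imK)).sub (ha.const_mul c.imJ)).smul_const (e 1))

lemma hasDerivAt_H4 (f₀ : (Fin 4 → ℝ) → ℝ) (hf₀ : ContDiff ℝ 1 f₀) (c : ℍ[ℝ]) :
    HasDerivAt (H4 f₀ c) (d4 f₀ c) 0 := by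
  have h0 := hasDerivAt_φ f₀ hf₀ c 0
  have ha := hasDerivAt_φ f₀ hf₀ c 1
  have hb := hasDerivAt_φ f₀ hf₀ c 2
  exact ((((ha.const_mul c.imI).add (hb.const_mul c.imJ)).smul_const (e 3)).sub
    (((h0.const_mul ((-1 : ℝ) ^ (2 + 3) * c.imI)).add (hb.const_mul c.imK)).smul_const
      (e 2))).add
    (((h0.const_mul ((-1 : ℝ) ^ (2 + 3) * c.imJ)).sub (ha.const_mul c.imK)).smul_const (e 1))

/-- The derivative of the nice representative. -/
def DF (f₀ f₁ : (Fin 4 → ℝ) → ℝ) (c : ℍ[ℝ]) : ℍ[ℝ] →L[ℝ] ℍ[ℝ] :=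
  ((fderiv ℝ f₁ (toTuple c)).comp Tc).smulRight (e 0) +
  (c.imI • ((fderiv ℝ f₀ (toTuple c)).comp Tc) + f₀ (toTuple c) • cd 1).smulRight (e 1) +
  (c.imJ • ((fderiv ℝ f₀ (toTuple c)).comp Tc) + f₀ (toTuple c) • cd 2).smulRight (e 2) +
  (c.imK • ((fderiv ℝ f₀ (toTuple c)).comp Tc) + f₀ (toTuple c) • cd 3).smulRight (e 3)

lemma hasFDerivAt_F (f₀ f₁ : (Fin 4 → ℝ) → ℝ) (hf₀ : ContDiff ℝ 1 f₀)
    (hf₁ : ContDiff ℝ 1 f₁) (c : ℍ[ℝ]) :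
    HasFDerivAt (fun x : ℍ[ℝ] => f₁ (toTuple x) • e 0 + (x.imI * f₀ (toTuple x)) • e 1 +
      (x.imJ * f₀ (toTuple x)) • e 2 + (x.imK * f₀ (toTuple x)) • e 3) (DF f₀ f₁ c) c := by
  have hT : HasFDerivAt (fun x : ℍ[ℝ] => toTuple x) Tc c := Tc.hasFDerivAt
  have h1 : HasFDerivAt (fun x : ℍ[ℝ] => f₁ (toTuple x))
      ((fderiv ℝ f₁ (toTuple c)).comp Tc) c :=
    (((hf₁.differentiable one_ne_zero) (toTuple c)).hasFDerivAt).comp c hT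
  have h0 : HasFDerivAt (fun x : ℍ[ℝ] => f₀ (toTuple x))
      ((fderiv ℝ f₀ (toTuple c)).comp Tc) c :=
    (((hf₀.differentiable one_ne_zero) (toTuple c)).hasFDerivAt).comp c hT
  have hm1 : HasFDerivAt (fun x : ℍ[ℝ] => x.imI * f₀ (toTuple x))
      (c.imI • ((fderiv ℝ f₀ (toTuple c)).comp Tc) + f₀ (toTuple c) • cd 1) c :=
    ((cd 1).hasFDerivAt).mul h0
  have hm2 : HasFDerivAt (fun x : ℍ[ℝ] => x.imJ * f₀ (toTuple x))
      (c.imJ • ((fderiv ℝ f₀ (toTuple c)).comp Tc) + f₀ (toTuple c) • cd 2) c :=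
    ((cd 2).hasFDerivAt).mul h0
  have hm3 : HasFDerivAt (fun x : ℍ[ℝ] => x.imK * f₀ (toTuple x))
      (c.imK • ((fderiv ℝ f₀ (toTuple c)).comp Tc) + f₀ (toTuple c) • cd 3) c :=
    ((cd 3).hasFDerivAt).mul h0
  exact (((h1.smul_const (e 0)).add (hm1.smul_const (e 1))).add (hm2.smul_const (e 2))).add
    (hm3.smul_const (e 3))

/-- The full linear map (candidate derivative of the numerator). -/
def Lmap (f₀ f₁ : (Fin 4 → ℝ) → ℝ) (c : ℍ[ℝ]) : ℍ[ℝ] →L[ℝ] ℍ[ℝ] :=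
  DF f₀ f₁ c + ((1 : ℝ →L[ℝ] ℝ).smulRight (d2 f₀ c)).comp (cd 1) +
  ((1 : ℝ →L[ℝ] ℝ).smulRight (d3 f₀ c)).comp (cd 2) +
  ((1 : ℝ →L[ℝ] ℝ).smulRight (d4 f₀ c)).comp (cd 3)

lemma clm_expand (ℓ : (Fin 4 → ℝ) →L[ℝ] ℝ) (y : Fin 4 → ℝ) :
    ℓ y = y 0 * ℓ (Pi.single 0 1 : Fin 4 → ℝ) + y 1 * ℓ (Pi.single 1 1 : Fin 4 → ℝ) +
      y 2 * ℓ (Pi.single 2 1 : Fin 4 → ℝ) + y 3 * ℓ (Pi.single 3 1 : Fin 4 → ℝ) := by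
  have hy : y = y 0 • (Pi.single 0 1 : Fin 4 → ℝ) + y 1 • (Pi.single 1 1 : Fin 4 → ℝ) +
      y 2 • (Pi.single 2 1 : Fin 4 → ℝ) + y 3 • (Pi.single 3 1 : Fin 4 → ℝ) := by
    funext i; fin_cases i <;> simp [Pi.single_apply]
  conv_lhs => rw [hy]
  simp [smul_eq_mul]

lemma tt_e0 : toTuple (1 : ℍ[ℝ]) = (Pi.single 0 1 : Fin 4 → ℝ) := by
  funext i; fin_cases i <;> simp [toTuple, Pi.single_apply]

lemma tt_e0' : toTuple (e 0) = (Pi.single 0 1 : Fin 4 → ℝ) := tt_e0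

lemma DF_e0 (f₀ f₁ : (Fin 4 → ℝ) → ℝ) (c : ℍ[ℝ]) :
    DF f₀ f₁ c (e 0) = (⟨pd f₁ 0 (toTuple c), c.imI * pd f₀ 0 (toTuple c),
      c.imJ * pd f₀ 0 (toTuple c), c.imK * pd f₀ 0 (toTuple c)⟩ : ℍ[ℝ]) := by
  apply QuaternionAlgebra.ext <;>
    simp [DF, pd, tt_e0, tt_e0', Pi.single_apply]

lemma DF_e0_re (f₀ f₁ : (Fin 4 → ℝ) → ℝ) (c : ℍ[ℝ]) :
    (DF f₀ f₁ c (e 0)).re = pd f₁ 0 (toTuple c) := by rw [DF_e0]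
lemma DF_e0_imI (f₀ f₁ : (Fin 4 → ℝ) → ℝ) (c : ℍ[ℝ]) :
    (DF f₀ f₁ c (e 0)).imI = c.imI * pd f₀ 0 (toTuple c) := by rw [DF_e0]
lemma DF_e0_imJ (f₀ f₁ : (Fin 4 → ℝ) → ℝ) (c : ℍ[ℝ]) :
    (DF f₀ f₁ c (e 0)).imJ = c.imJ * pd f₀ 0 (toTuple c) := by rw [DF_e0]
lemma DF_e0_imK (f₀ f₁ : (Fin 4 → ℝ) → ℝ) (c : ℍ[ℝ]) :
    (DF f₀ f₁ c (e 0)).imK = c.imK * pd f₀ 0 (toTuple c) := by rw [DF_e0]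

lemma key (f₀ f₁ : (Fin 4 → ℝ) → ℝ) (c : ℍ[ℝ])
    (R1 : pd f₁ 0 (toTuple c) = f₀ (toTuple c) + toTuple c 1 * pd f₀ 1 (toTuple c) +
      toTuple c 2 * pd f₀ 2 (toTuple c) + toTuple c 3 * pd f₀ 3 (toTuple c))
    (h10 : pd f₁ 1 (toTuple c) = -(toTuple c 1 * pd f₀ 0 (toTuple c)))
    (h20 : pd f₁ 2 (toTuple c) = -(toTuple c 2 * pd f₀ 0 (toTuple c)))
    (h30 : pd f₁ 3 (toTuple c) = -(toTuple c 3 * pd f₀ 0 (toTuple c)))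
    (h12 : toTuple c 1 * pd f₀ 2 (toTuple c) = toTuple c 2 * pd f₀ 1 (toTuple c))
    (h13 : toTuple c 1 * pd f₀ 3 (toTuple c) = toTuple c 3 * pd f₀ 1 (toTuple c))
    (h23 : toTuple c 2 * pd f₀ 3 (toTuple c) = toTuple c 3 * pd f₀ 2 (toTuple c))
    (v : ℍ[ℝ]) : Lmap f₀ f₁ c v = v * DF f₀ f₁ c (e 0) := by
  simp only [tt1, tt2, tt3] at R1 h10 h20 h30 h12 h13 h23
  have hv1 : Lmap f₀ f₁ c v = DF f₀ f₁ c v + v.imI • d2 f₀ c + v.imJ • d3 f₀ c +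
      v.imK • d4 f₀ c := by
    simp [Lmap]
  rw [hv1]
  have hDv : DF f₀ f₁ c v =
      (fderiv ℝ f₁ (toTuple c) (toTuple v)) • e 0 +
      (c.imI * fderiv ℝ f₀ (toTuple c) (toTuple v) + f₀ (toTuple c) * v.imI) • e 1 +
      (c.imJ * fderiv ℝ f₀ (toTuple c) (toTuple v) + f₀ (toTuple c) * v.imJ) • e 2 +
      (c.imK * fderiv ℝ f₀ (toTuple c) (toTuple v) + f₀ (toTuple c) * v.imK) • e 3 := by
    simp [DF, smul_eq_mul]
  rw [hDv, clm_expand (fderiv ℝ f₁ (toTuple c)) (toTuple v),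
    clm_expand (fderiv ℝ f₀ (toTuple c)) (toTuple v)]
  simp only [tt0, tt1, tt2, tt3]
  simp only [pd] at R1 h10 h20 h30 h12 h13 h23
  apply QuaternionAlgebra.ext
  · simp [d2, d3, d4, pd, hre_mul, DF_e0_re, DF_e0_imI, DF_e0_imJ, DF_e0_imK]
    linear_combination v.imI * h10 + v.imJ * h20 + v.imK * h30
  · simp [d2, d3, d4, pd, himI_mul, DF_e0_re, DF_e0_imI, DF_e0_imJ, DF_e0_imK]
    linear_combination -v.imI * R1 + v.imJ * h12 + v.imK * h13
  · simp [d2, d3, d4, pd, himJ_mul, DF_e0_re, DF_e0_imI, DF_e0_imJ, DF_e0_imK]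
    linear_combination -v.imI * h12 - v.imJ * R1 + v.imK * h23
  · simp [d2, d3, d4, pd, himK_mul, DF_e0_re, DF_e0_imI, DF_e0_imJ, DF_e0_imK]
    linear_combination -v.imI * h13 - v.imJ * h23 - v.imK * R1

end LeftQuotProof

/-- if `f` is algebraic regular at `c`, the left difference quotient
tends to `∂f/∂x₁(c)` as `Δq → 0`. -/
theorem tendsto_leftQuot_of_algebraicRegularAt (U : Set ℍ[ℝ]) (hU : IsOpen U)
    (f : ℍ[ℝ] → ℍ[ℝ]) (f₀ f₁ : (Fin 4 → ℝ) → ℝ)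
    (hf₀ : ContDiff ℝ 1 f₀) (hf₁ : ContDiff ℝ 1 f₁)
    (hf : Represents f U f₀ f₁) (c : ℍ[ℝ]) (hc : c ∈ U)
    (hreg : AlgebraicRegularAt f U c) :
    Filter.Tendsto (leftQuot f f₀ c) (nhdsWithin 0 {q : ℍ[ℝ] | q ≠ 0})
      (nhds (fderiv ℝ f c (e 0))) := by
  classical
  open LeftQuotProof in
  obtain ⟨g₀, g₁, hg₀c, hg₁c, hgrep, hgreg⟩ := hreg
  have hreg' : RegularEqs f₀ f₁ (toTuple c) :=
    LeftQuotProof.regEqs_transfer hU hf₀.continuous hg₀c.continuous hf hgrep hc hgreg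
  obtain ⟨R1, R2, R3⟩ := hreg'
  have h10 := R2 1 (by decide)
  have h20 := R2 2 (by decide)
  have h30 := R2 3 (by decide)
  have h12 := R3 1 2 (by decide) (by decide) (by decide)
  have h13 := R3 1 3 (by decide) (by decide) (by decide)
  have h23 := R3 2 3 (by decide) (by decide) (by decide)
  -- derivative of f at c
  have hFd : HasFDerivAt (fun x : ℍ[ℝ] => f₁ (toTuple x) • e 0 + (x.imI * f₀ (toTuple x)) • e 1 +
      (x.imJ * f₀ (toTuple x)) • e 2 + (x.imK * f₀ (toTuple x)) • e 3)
      (LeftQuotProof.DF f₀ f₁ c) c := LeftQuotProof.hasFDerivAt_F f₀ f₁ hf₀ hf₁ c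
  have hfF : f =ᶠ[nhds c] fun x : ℍ[ℝ] => f₁ (toTuple x) • e 0 +
      (x.imI * f₀ (toTuple x)) • e 1 + (x.imJ * f₀ (toTuple x)) • e 2 +
      (x.imK * f₀ (toTuple x)) • e 3 :=
    Filter.eventuallyEq_of_mem (hU.mem_nhds hc) fun x hx => hf x hx
  have hfd : HasFDerivAt f (LeftQuotProof.DF f₀ f₁ c) c := hFd.congr_of_eventuallyEq hfF
  have hA : fderiv ℝ f c (e 0) = LeftQuotProof.DF f₀ f₁ c (e 0) := by rw [hfd.fderiv]
  -- derivative of the translated f at 0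
  have htrans : HasFDerivAt (fun Δq : ℍ[ℝ] => f (c + Δq)) (LeftQuotProof.DF f₀ f₁ c) 0 := by
    have hadd : HasFDerivAt (fun Δq : ℍ[ℝ] => c + Δq) (ContinuousLinearMap.id ℝ ℍ[ℝ]) 0 :=
      (hasFDerivAt_id (0 : ℍ[ℝ])).const_add c
    have hfd' : HasFDerivAt f (LeftQuotProof.DF f₀ f₁ c) (c + 0) := by simpa using hfd
    have h := hfd'.comp 0 hadd
    exact h
  -- derivatives of the three corrections
  have hG2 : HasFDerivAt (fun Δq : ℍ[ℝ] => flTwo f₀ c (c + Δq.imI • LeftQuotProof.sQ))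
      (((1 : ℝ →L[ℝ] ℝ).smulRight (LeftQuotProof.d2 f₀ c)).comp (LeftQuotProof.cd 1)) 0 := by
    have hH : HasFDerivAt (LeftQuotProof.H2 f₀ c)
        ((1 : ℝ →L[ℝ] ℝ).smulRight (LeftQuotProof.d2 f₀ c)) (LeftQuotProof.cd 1 (0 : ℍ[ℝ])) := by
      exact (LeftQuotProof.hasDerivAt_H2 f₀ hf₀ c).hasFDerivAt
    have h := hH.comp (0 : ℍ[ℝ]) (LeftQuotProof.cd 1).hasFDerivAt
    have heq : (LeftQuotProof.H2 f₀ c) ∘ (LeftQuotProof.cd 1) =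
        fun Δq : ℍ[ℝ] => flTwo f₀ c (c + Δq.imI • LeftQuotProof.sQ) := by
      funext Δq
      exact (LeftQuotProof.flTwo_comp f₀ c Δq.imI).symm
    rwa [heq] at h
  have hG3 : HasFDerivAt (fun Δq : ℍ[ℝ] => flThree f₀ c (c + Δq.imJ • LeftQuotProof.sQ))
      (((1 : ℝ →L[ℝ] ℝ).smulRight (LeftQuotProof.d3 f₀ c)).comp (LeftQuotProof.cd 2)) 0 := by
    have hH : HasFDerivAt (LeftQuotProof.H3 f₀ c)
        ((1 : ℝ →L[ℝ] ℝ).smulRight (LeftQuotProof.d3 f₀ c)) (LeftQuotProof.cd 2 (0 : ℍ[ℝ])) := by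
      exact (LeftQuotProof.hasDerivAt_H3 f₀ hf₀ c).hasFDerivAt
    have h := hH.comp (0 : ℍ[ℝ]) (LeftQuotProof.cd 2).hasFDerivAt
    have heq : (LeftQuotProof.H3 f₀ c) ∘ (LeftQuotProof.cd 2) =
        fun Δq : ℍ[ℝ] => flThree f₀ c (c + Δq.imJ • LeftQuotProof.sQ) := by
      funext Δq
      exact (LeftQuotProof.flThree_comp f₀ c Δq.imJ).symm
    rwa [heq] at h
  have hG4 : HasFDerivAt (fun Δq : ℍ[ℝ] => flFour f₀ c (c + Δq.imK • LeftQuotProof.sQ))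
      (((1 : ℝ →L[ℝ] ℝ).smulRight (LeftQuotProof.d4 f₀ c)).comp (LeftQuotProof.cd 3)) 0 := by
    have hH : HasFDerivAt (LeftQuotProof.H4 f₀ c)
        ((1 : ℝ →L[ℝ] ℝ).smulRight (LeftQuotProof.d4 f₀ c)) (LeftQuotProof.cd 3 (0 : ℍ[ℝ])) := by
      exact (LeftQuotProof.hasDerivAt_H4 f₀ hf₀ c).hasFDerivAt
    have h := hH.comp (0 : ℍ[ℝ]) (LeftQuotProof.cd 3).hasFDerivAt
    have heq : (LeftQuotProof.H4 f₀ c) ∘ (LeftQuotProof.cd 3) =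
        fun Δq : ℍ[ℝ] => flFour f₀ c (c + Δq.imK • LeftQuotProof.sQ) := by
      funext Δq
      exact (LeftQuotProof.flFour_comp f₀ c Δq.imK).symm
    rwa [heq] at h
  -- the numerator
  set N : ℍ[ℝ] → ℍ[ℝ] := fun Δq => f (c + Δq) - f c +
      (flTwo f₀ c (c + Δq.imI • LeftQuotProof.sQ) - flTwo f₀ c c) +
      (flThree f₀ c (c + Δq.imJ • LeftQuotProof.sQ) - flThree f₀ c c) +
      (flFour f₀ c (c + Δq.imK • LeftQuotProof.sQ) - flFour f₀ c c) with hNdef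
  have hNd : HasFDerivAt N (LeftQuotProof.Lmap f₀ f₁ c) 0 :=
    (((htrans.sub_const (f c)).add (hG2.sub_const _)).add (hG3.sub_const _)).add
      (hG4.sub_const _)
  have hN0 : N 0 = 0 := by
    simp [hNdef]
  have hlo : (fun v : ℍ[ℝ] => N v - LeftQuotProof.Lmap f₀ f₁ c v) =o[nhds (0 : ℍ[ℝ])]
      fun v => v := by
    have h := hNd.isLittleO
    simpa [hN0] using h
  have hkey : ∀ v : ℍ[ℝ], LeftQuotProof.Lmap f₀ f₁ c v = v * LeftQuotProof.DF f₀ f₁ c (e 0) :=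
    LeftQuotProof.key f₀ f₁ c R1 h10 h20 h30 h12 h13 h23
  have hquot : ∀ v : ℍ[ℝ], v ≠ 0 → leftQuot f f₀ c v - LeftQuotProof.DF f₀ f₁ c (e 0) =
      v⁻¹ * (N v - LeftQuotProof.Lmap f₀ f₁ c v) := by
    intro v hv
    have h1 : leftQuot f f₀ c v = v⁻¹ * N v := rfl
    rw [h1, hkey v, mul_sub, ← mul_assoc, inv_mul_cancel₀ hv, one_mul]
  have hlim : Filter.Tendsto (fun v : ℍ[ℝ] => ‖N v - LeftQuotProof.Lmap f₀ f₁ c v‖ / ‖v‖)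
      (nhdsWithin (0 : ℍ[ℝ]) {q : ℍ[ℝ] | q ≠ 0}) (nhds 0) :=
    (hlo.norm_norm.tendsto_div_nhds_zero).mono_left nhdsWithin_le_nhds
  rw [hA, tendsto_iff_norm_sub_tendsto_zero]
  refine hlim.congr' ?_
  filter_upwards [self_mem_nhdsWithin] with v hv
  rw [hquot v hv, norm_mul, norm_inv, div_eq_inv_mul]
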